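/- Let V be a k-vector space and φ an endomorphism of V. If W is a finite-dimensional subspace of V with φW ⊆ W and φⁿV ⊆ W for some n, then the trace of φ on V (Tate's trace) equals the ordinary trace of the restriction of φ to W. -/

import Mathlib

/-- An endomorphism is finite potent if some power has finite-dimensional range. -/
def IsFinitePotent {k V : Type*} [Field k] [AddCommGroup V] [Module k V]
    (φ : V →ₗ[k] V) : Prop :=
  ∃ n : ℕ, FiniteDimensional k (LinearMap.range (φ ^ n))

/-- `c` is a value of Tate's trace of `φ`: the ordinary trace of the restriction of `φ` to
any finite-dimensional `φ`-invariant subspace `W` with `φⁿ V ⊆ W` for some `n` equals `c`. -/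
def TateTraceSpec {k V : Type*} [Field k] [AddCommGroup V] [Module k V]
    (φ : V →ₗ[k] V) (c : k) : Prop :=
  ∀ (W : Submodule k V) (hW : ∀ x ∈ W, φ x ∈ W), FiniteDimensional k W →
    (∃ n : ℕ, LinearMap.range (φ ^ n) ≤ W) →
    LinearMap.trace k W (φ.restrict hW) = c

open Classical in
/-- Tate's trace of a finite potent endomorphism. -/
noncomputable def tateTrace {k V : Type*} [Field k] [AddCommGroup V] [Module k V]
    (φ : V →ₗ[k] V) : k :=
  if h : ∃ c, TateTraceSpec φ c then h.choose else 0

open LinearMap in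
/-- The trace of an endomorphism of a finite-dimensional space equals the trace of its
restriction to an invariant subspace containing the range of some power. -/
lemma trace_eq_trace_restrict_of_pow_range_le
    {k W : Type*} [Field k] [AddCommGroup W] [Module k W] [FiniteDimensional k W]
    (f : W →ₗ[k] W) (p : Submodule k W) (hp : ∀ x ∈ p, f x ∈ p)
    (n : ℕ) (hn : LinearMap.range (f ^ n) ≤ p) :
    LinearMap.trace k W f = LinearMap.trace k p (f.restrict hp) := by
  obtain ⟨q, hq⟩ := Submodule.exists_isCompl p
  set e : W →ₗ[k] W := p.subtype ∘ₗ p.linearProjOfIsCompl q hq with he_def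
  have hep : ∀ x, e x ∈ p := fun x => SetLike.coe_mem _
  have heid : ∀ x ∈ p, e x = x := by
    intro x hx
    exact congrArg (Submodule.subtype p)
      (Submodule.linearProjOfIsCompl_apply_left hq ⟨x, hx⟩)
  have hsub : ∀ (y : W), y ∈ p → ((1 : W →ₗ[k] W) - e) y = 0 := by
    intro y hy
    simp only [LinearMap.sub_apply, Module.End.one_apply]
    rw [heid y hy, sub_self]
  have hfe : ((1 : W →ₗ[k] W) - e) * f * e = 0 := by
    ext x
    simp only [Module.End.mul_apply, LinearMap.zero_apply]
    exact hsub _ (hp _ (hep x))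
  have h1 : ((1 : W →ₗ[k] W) - e) * f * (1 - e) = (1 - e) * f := by
    rw [mul_sub, mul_one, hfe, sub_zero]
  have hpow : ∀ m : ℕ, ((1 - e) * f) ^ (m + 1) = (1 - e) * f ^ (m + 1) := by
    intro m
    induction m with
    | zero => simp
    | succ m ih =>
      rw [pow_succ' ((1 - e) * f), ih, ← mul_assoc, mul_assoc ((1-e)*f), ← mul_assoc, h1,
        mul_assoc, ← pow_succ']
  have hnil : ((1 - e) * f) ^ (n + 1) = 0 := by
    rw [hpow n]
    ext x
    simp only [Module.End.mul_apply, LinearMap.zero_apply]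
    refine hsub _ ?_
    have : (f ^ (n + 1)) x = (f ^ n) (f x) := by rw [pow_succ]; rfl
    rw [this]
    exact hn ⟨f x, rfl⟩
  have htr0 : LinearMap.trace k W ((1 - e) * f) = 0 :=
    (LinearMap.isNilpotent_trace_of_isNilpotent ⟨n + 1, hnil⟩).eq_zero
  have hdecomp : e * f + (1 - e) * f = f := by rw [sub_mul, one_mul]; abel
  have h2 : LinearMap.trace k W f = LinearMap.trace k W (e * f) := by
    conv_lhs => rw [← hdecomp]
    rw [map_add, htr0, add_zero]
  set c : W →ₗ[k] p := LinearMap.codRestrict p (e ∘ₗ f) (fun x => hep _) with hc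
  have h3 : (e * f : W →ₗ[k] W) = p.subtype ∘ₗ c := by ext x; simp [hc]
  have h4 : c ∘ₗ p.subtype = f.restrict hp := by
    ext x
    simp only [hc, coe_comp, Function.comp_apply, codRestrict_apply,
      Submodule.coe_subtype, restrict_coe_apply]
    exact heid _ (hp _ x.2)
  rw [h2, h3, LinearMap.trace_comp_comm', h4]

open LinearMap in
/-- Transported version: comparing the trace on an invariant finite-dimensional submodule `W`
of `V` with the trace on a smaller invariant submodule `p ≤ W` containing `range (φ ^ m)`. -/
lemma trace_restrict_eq_trace_restrict_of_le
    {k V : Type*} [Field k] [AddCommGroup V] [Module k V] (φ : V →ₗ[k] V)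
    (W : Submodule k V) (hW : ∀ x ∈ W, φ x ∈ W) [FiniteDimensional k W]
    (p : Submodule k V) (hple : p ≤ W) (hp : ∀ x ∈ p, φ x ∈ p)
    (m : ℕ) (hm : LinearMap.range (φ ^ m) ≤ p) :
    LinearMap.trace k W (φ.restrict hW) = LinearMap.trace k p (φ.restrict hp) := by
  set f := φ.restrict hW with hf
  set p' := p.comap W.subtype with hp'def
  have hp' : ∀ x ∈ p', f x ∈ p' := by
    intro x hx
    simp only [hp'def, Submodule.mem_comap, Submodule.coe_subtype, hf,
      restrict_coe_apply] at *
    exact hp _ hx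
  have hr' : LinearMap.range (f ^ m) ≤ p' := by
    rintro y ⟨x, rfl⟩
    have hcoe : ((f ^ m) x : V) = (φ ^ m) (x : V) := by
      rw [hf, Module.End.pow_restrict m hW, restrict_coe_apply]
    simp only [hp'def, Submodule.mem_comap, Submodule.coe_subtype, hcoe]
    exact hm ⟨(x : V), rfl⟩
  rw [trace_eq_trace_restrict_of_pow_range_le f p' hp' m hr']
  set e := Submodule.comapSubtypeEquivOfLe hple with he
  have hconj : e.conj (f.restrict hp') = φ.restrict hp := by
    ext x
    obtain ⟨y, rfl⟩ := e.surjective x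
    simp [LinearEquiv.conj_apply, he, hf, Submodule.comapSubtypeEquivOfLe_apply_coe]
  rw [← hconj, LinearMap.trace_conj']

theorem tateTrace_eq_trace_restrict {k V : Type*} [Field k] [AddCommGroup V] [Module k V]
    (φ : V →ₗ[k] V) (hφ : IsFinitePotent φ)
    (W : Submodule k V) (hW : ∀ x ∈ W, φ x ∈ W) (hfd : FiniteDimensional k W)
    (n : ℕ) (hn : LinearMap.range (φ ^ n) ≤ W) :
    tateTrace φ = LinearMap.trace k W (φ.restrict hW) := by
  have hspec : TateTraceSpec φ (LinearMap.trace k W (φ.restrict hW)) := by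
    intro W₂ hW₂ hfd₂ ⟨n₂, hn₂⟩
    set p := W ⊓ W₂ with hpdef
    have hp : ∀ x ∈ p, φ x ∈ p := fun x hx => ⟨hW x hx.1, hW₂ x hx.2⟩
    have hr : LinearMap.range (φ ^ (n + n₂)) ≤ p := by
      rintro y ⟨x, rfl⟩
      constructor
      · have : (φ ^ (n + n₂)) x = (φ ^ n) ((φ ^ n₂) x) := by rw [pow_add]; rfl
        rw [this]; exact hn ⟨_, rfl⟩
      · have : (φ ^ (n + n₂)) x = (φ ^ n₂) ((φ ^ n) x) := by rw [add_comm, pow_add]; rfl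
        rw [this]; exact hn₂ ⟨_, rfl⟩
    rw [trace_restrict_eq_trace_restrict_of_le φ W₂ hW₂ p inf_le_right hp (n + n₂) hr,
      trace_restrict_eq_trace_restrict_of_le φ W hW p inf_le_left hp (n + n₂) hr]
  have hex : ∃ c, TateTraceSpec φ c := ⟨_, hspec⟩
  rw [tateTrace, dif_pos hex]
  exact (hex.choose_spec W hW hfd ⟨n, hn⟩).symm
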